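/- Let a, b, c be integers with a < 0, b < 0, c ≥ 0, a ∣ c, b ∣ c, and a*b - c^2 ≥ 0. Then either c = 0, or both c = -a and c = -b (in which case a*b - c^2 = 0). -/
import Mathlib


theorem stmt_3 (a b c : ℤ) (ha : a < 0) (hb : b < 0) (hc : 0 ≤ c)
    (hac : a ∣ c) (hbc : b ∣ c) (hdet : a * b - c ^ 2 ≥ 0) :
    c = 0 ∨ (c = -a ∧ c = -b ∧ a * b - c ^ 2 = 0) := by
  rcases eq_or_lt_of_le hc with h0 | hpos
  · exact Or.inl h0.symm
  obtain ⟨k, hk⟩ := hac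
  obtain ⟨m, hm⟩ := hbc
  right
  have hkneg : k ≤ -1 := by nlinarith
  have hmneg : m ≤ -1 := by nlinarith
  have hab : 0 < a * b := mul_pos_of_neg_of_neg ha hb
  have hkm : k * m ≤ 1 := by nlinarith
  have hk1 : k = -1 := by nlinarith
  have hm1 : m = -1 := by nlinarith
  subst hk1 hm1
  refine ⟨by linarith [hk], by linarith [hm], by nlinarith⟩
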